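/- Let n be a positive integer, X ∈ 𝒯(n) a triangulation of the punctured n-gon, and a := top(X). Then for every j ∈ {1, …, n}, the projective arc at the residue class of j belongs to X if and only if a'_j = ‖a'‖. (Adachi, Lemma on projective arcs and maximal partial sums, part (1) of the lemma preceding Proposition on injectivity.) -/

import Mathlib

/-!
Combinatorial model of admissible arcs and triangulations of a regular
`n`-gon with one puncture (following Adachi, "The classification of
τ-tilting modules over Nakayama algebras").
-/

namespace Punctured

/-- Admissible arcs in a regular `n`-gon with one puncture:
an *inner arc* `inner i t` runs counterclockwise from vertex `i` to vertex
`i + t` (with `2 ≤ t ≤ n` required for admissibility); a *projective arc*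
`proj j` runs from the puncture to the vertex `j`. -/
inductive Arc (n : ℕ) : Type
  | inner (i : ZMod n) (t : ℕ) : Arc n
  | proj (j : ZMod n) : Arc n

namespace Arc

/-- The terminal point of an admissible arc. -/
def terminal {n : ℕ} : Arc n → ZMod n
  | .inner i t => i + (t : ZMod n)
  | .proj j => j

/-- Admissibility: inner arcs must have length `2 ≤ t ≤ n`. -/
def IsAdmissible {n : ℕ} : Arc n → Prop
  | .inner _ t => 2 ≤ t ∧ t ≤ n
  | .proj _ => True

/-- Compatibility (non-crossing) of two admissible arcs, defined via
lifts to `ℤ`. -/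
def Compatible {n : ℕ} : Arc n → Arc n → Prop
  | .inner i t, .inner k s =>
      ¬ ∃ x y : ℤ, (x : ZMod n) = i ∧ (y : ZMod n) = k ∧
        ((x < y ∧ y < x + (t : ℤ) ∧ x + (t : ℤ) < y + (s : ℤ)) ∨
         (y < x ∧ x < y + (s : ℤ) ∧ y + (s : ℤ) < x + (t : ℤ)))
  | .inner i t, .proj j =>
      ¬ ∃ x y : ℤ, (x : ZMod n) = i ∧ (y : ZMod n) = j ∧ x < y ∧ y < x + (t : ℤ)
  | .proj j, .inner i t =>
      ¬ ∃ x y : ℤ, (x : ZMod n) = i ∧ (y : ZMod n) = j ∧ x < y ∧ y < x + (t : ℤ)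
  | .proj _, .proj _ => True

end Arc

/-- A set of admissible arcs which is pairwise compatible. -/
def PairwiseCompatible (n : ℕ) (X : Set (Arc n)) : Prop :=
  (∀ a ∈ X, a.IsAdmissible) ∧ ∀ a ∈ X, ∀ b ∈ X, a.Compatible b

/-- A triangulation of the punctured `n`-gon: a pairwise compatible set of
admissible arcs, maximal under inclusion among such sets. -/
def IsTriangulation (n : ℕ) (X : Set (Arc n)) : Prop :=
  PairwiseCompatible n X ∧
    ∀ Y : Set (Arc n), PairwiseCompatible n Y → X ⊆ Y → Y = X

/-- `top(X)`: for each residue class `c`, the number of arcs of `X` with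
terminal point `c`. -/
noncomputable def topSeq (n : ℕ) (X : Set (Arc n)) : ZMod n → ℕ :=
  fun c => {arc ∈ X | Arc.terminal arc = c}.ncard

/-- The representative of `p` modulo `n` lying in `{1, …, n}`. -/
def resRep (n : ℕ) (p : ℤ) : ℕ := ((p - 1) % (n : ℤ)).toNat + 1

/-- `a'_p := Σ_{j=1}^{(p)_n} (a_j - 1)`, the `n`-periodic extension of the
partial-sum sequence of `a`. -/
def psum (n : ℕ) (a : ZMod n → ℕ) (p : ℤ) : ℤ :=
  ∑ j ∈ Finset.Icc 1 (resRep n p), ((a ((j : ℕ) : ZMod n) : ℤ) - 1)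

/-- `‖a'‖ := max {a'_1, …, a'_n}`. -/
noncomputable def pnorm (n : ℕ) (a : ZMod n → ℕ) : ℤ :=
  sSup ((fun i : ℕ => psum n a (i : ℤ)) '' Set.Icc 1 n)

/-- `δ_p = 1` if `a'_p = ‖a'‖` and `δ_p = 0` otherwise. -/
noncomputable def deltaInt (n : ℕ) (a : ZMod n → ℕ) (p : ℤ) : ℤ :=
  if psum n a p = pnorm n a then 1 else 0

/-- `k_s^j := max {k ∈ ℤ : k < j - 1 and a'_k = a'_{j-1} + s}`. -/
noncomputable def kmax (n : ℕ) (a : ZMod n → ℕ) (j s : ℤ) : ℤ :=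
  sSup {k : ℤ | k < j - 1 ∧ psum n a k = psum n a (j - 1) + s}

/-- `ℓ_j(a)`. -/
noncomputable def ellj (n : ℕ) (a : ZMod n → ℕ) (j : ℕ) : ℤ :=
  if (a ((j : ℕ) : ZMod n) : ℤ) - deltaInt n a (j : ℤ) = 0 then 0
  else (j : ℤ) - kmax n a (j : ℤ) ((a ((j : ℕ) : ZMod n) : ℤ) - deltaInt n a (j : ℤ))

section Basics
variable {n : ℕ}

lemma compat_symm {a b : Arc n} (h : a.Compatible b) : b.Compatible a := by
  cases a <;> cases b
  · simp only [Arc.Compatible] at h ⊢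
    rintro ⟨x, y, hx, hy, hor⟩
    exact h ⟨y, x, hy, hx, Or.symm hor⟩
  · exact h
  · exact h
  · trivial

lemma finite_of_pc {X : Set (Arc n)} (hn : 0 < n) (h : PairwiseCompatible n X) : X.Finite := by
  haveI : NeZero n := ⟨hn.ne'⟩
  have hsub : X ⊆ (fun p : ZMod n × ℕ => Arc.inner p.1 p.2) '' (Set.univ ×ˢ Set.Iic n)
      ∪ Arc.proj '' Set.univ := by
    intro a ha
    cases a with
    | inner i t =>
      left
      exact ⟨(i, t), ⟨Set.mem_univ _, (h.1 _ ha).2⟩, rfl⟩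
    | proj j => right; exact ⟨j, Set.mem_univ _, rfl⟩
  exact Set.Finite.subset (((Set.finite_univ.prod (Set.finite_Iic n)).image _).union
    ((Set.finite_univ).image _)) hsub

/-- Integer congruence from equality of casts in `ZMod n`. -/
lemma int_eq_of_zmod_eq (hn : 0 < n) {a b : ℤ} (h : (a : ZMod n) = (b : ZMod n))
    (hab : a - b < n) (hba : b - a < n) : a = b := by
  haveI : NeZero n := ⟨hn.ne'⟩
  have := (ZMod.intCast_eq_intCast_iff' a b n).1 h
  unfold Int.ModEq at this
  have hd : (n : ℤ) ∣ a - b := Int.ModEq.dvd this.symm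
  obtain ⟨k, hk⟩ := hd
  have hn' : (0:ℤ) < n := by exact_mod_cast hn
  have hk1 : k ≤ -1 → a - b ≤ -n := fun h => by nlinarith
  have hk2 : 1 ≤ k → (n:ℤ) ≤ a - b := fun h => by nlinarith
  have hk0 : k = 0 → a - b = 0 := fun h => by rw [h, mul_zero] at hk; exact hk
  omega

/-- The unique lift of `c` in the window `(y, y+n]`. -/
def Lft (n : ℕ) (y : ℤ) (c : ZMod n) : ℤ := y + 1 + ((c.val : ℤ) - (y + 1)) % n

lemma Lft_cast (hn : 0 < n) (y : ℤ) (c : ZMod n) : ((Lft n y c : ℤ) : ZMod n) = c := by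
  haveI : NeZero n := ⟨hn.ne'⟩
  unfold Lft
  rw [Int.emod_def]
  push_cast
  rw [ZMod.natCast_self, ZMod.natCast_val, ZMod.cast_id]
  ring

lemma Lft_mem (hn : 0 < n) (y : ℤ) (c : ZMod n) : y < Lft n y c ∧ Lft n y c ≤ y + n := by
  unfold Lft
  have hn' : (0:ℤ) < n := by exact_mod_cast hn
  have h1 := Int.emod_nonneg ((c.val : ℤ) - (y + 1)) hn'.ne'
  have h2 := Int.emod_lt_of_pos ((c.val : ℤ) - (y + 1)) hn'
  omega

lemma Lft_unique (hn : 0 < n) (y : ℤ) (c : ZMod n) {z : ℤ} (hz : (z : ZMod n) = c)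
    (h1 : y < z) (h2 : z ≤ y + n) : z = Lft n y c := by
  obtain ⟨hl1, hl2⟩ := Lft_mem hn y c
  exact int_eq_of_zmod_eq hn (by rw [hz, Lft_cast hn]) (by omega) (by omega)

lemma resRep_mem (hn : 0 < n) (p : ℤ) : 1 ≤ resRep n p ∧ resRep n p ≤ n := by
  unfold resRep
  have hn' : (0:ℤ) < n := by exact_mod_cast hn
  have h1 := Int.emod_nonneg (p - 1) hn'.ne'
  have h2 := Int.emod_lt_of_pos (p - 1) hn'
  omega

lemma resRep_cast (hn : 0 < n) (p : ℤ) : ((resRep n p : ℤ) : ZMod n) = (p : ZMod n) := by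
  haveI : NeZero n := ⟨hn.ne'⟩
  unfold resRep
  have hn' : (0:ℤ) < n := by exact_mod_cast hn
  have h1 := Int.emod_nonneg (p - 1) hn'.ne'
  push_cast [Int.toNat_of_nonneg h1]
  ring

lemma resRep_cast' (hn : 0 < n) (p : ℤ) :
    ((resRep n p : ℕ) : ZMod n) = ((p : ℤ) : ZMod n) := by
  rw [← resRep_cast hn p]
  push_cast
  ring

lemma resRep_unique (hn : 0 < n) (p : ℤ) {r : ℕ} (h1 : 1 ≤ r) (h2 : r ≤ n)
    (hc : ((r : ℤ) : ZMod n) = (p : ZMod n)) : resRep n p = r := by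
  obtain ⟨ha, hb⟩ := resRep_mem hn p
  have : (resRep n p : ℤ) = (r : ℤ) :=
    int_eq_of_zmod_eq hn (by rw [resRep_cast hn, hc]) (by omega) (by omega)
  omega

lemma resRep_congr (hn : 0 < n) {p q : ℤ} (h : (p : ZMod n) = (q : ZMod n)) :
    resRep n p = resRep n q := by
  obtain ⟨ha, hb⟩ := resRep_mem hn p
  exact (resRep_unique hn q ha hb (by rw [resRep_cast hn, h])).symm

lemma psum_congr (hn : 0 < n) (a : ZMod n → ℕ) {p q : ℤ} (h : (p : ZMod n) = (q : ZMod n)) :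
    psum n a p = psum n a q := by
  unfold psum; rw [resRep_congr hn h]

end Basics

/-- Two integer intervals cross. -/
def Cross (I J : ℤ × ℤ) : Prop :=
  (I.1 < J.1 ∧ J.1 < I.2 ∧ I.2 < J.2) ∨ (J.1 < I.1 ∧ I.1 < J.2 ∧ J.2 < I.2)

lemma cross_symm {I J : ℤ × ℤ} (h : Cross I J) : Cross J I := Or.symm h

/-- The marker function used for the counting injection. -/
noncomputable def Fz (C : Finset (ℤ × ℤ)) (I : ℤ × ℤ) : ℤ :=
  let S := (C.filter (fun J => J.2 = I.2 ∧ I.1 < J.1)).image Prod.fst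
  if h : S.Nonempty then S.min' h else I.2 - 1

lemma Fz_spec (C : Finset (ℤ × ℤ)) (hC1 : ∀ J ∈ C, J.1 + 2 ≤ J.2)
    (hC2 : ∀ I ∈ C, ∀ J ∈ C, ¬ Cross I J) (I : ℤ × ℤ) (hI : I ∈ C) :
    I.1 < Fz C I ∧ Fz C I < I.2 ∧
      (∀ K ∈ C, K ≠ I → I.1 ≤ K.1 → K.2 ≤ I.2 → ¬(K.1 < Fz C I ∧ Fz C I < K.2)) := by
  classical
  unfold Fz
  simp only []
  set S := (C.filter (fun J => J.2 = I.2 ∧ I.1 < J.1)).image Prod.fst with hS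
  split_ifs with h
  · have hmem : S.min' h ∈ (C.filter (fun J => J.2 = I.2 ∧ I.1 < J.1)).image Prod.fst :=
      S.min'_mem h
    simp only [Finset.mem_image, Finset.mem_filter] at hmem
    obtain ⟨J, ⟨hJC, hJ2, hJ1⟩, hJfst⟩ := hmem
    have hJlen := hC1 J hJC
    refine ⟨by omega, by omega, ?_⟩
    rintro K hK hKne hK1 hK2 ⟨hx1, hx2⟩
    by_cases hq : K.2 = I.2
    · have hK1' : I.1 < K.1 := by
        rcases lt_or_eq_of_le hK1 with h' | h'
        · exact h'
        · exact absurd (Prod.ext h'.symm hq) hKne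
      have hKS : K.1 ∈ S := by
        rw [hS]; exact Finset.mem_image_of_mem _ (Finset.mem_filter.2 ⟨hK, hq, hK1'⟩)
      have := S.min'_le _ hKS
      omega
    · -- K.2 < I.2, Cross K J
      have : Cross K J := by
        left
        refine ⟨by omega, by omega, by omega⟩
      exact hC2 K hK J hJC this
  · have hlen := hC1 I hI
    refine ⟨by omega, by omega, ?_⟩
    rintro K hK hKne hK1 hK2 ⟨hx1, hx2⟩
    have hq : K.2 = I.2 := by omega
    have hK1' : I.1 < K.1 := by
      rcases lt_or_eq_of_le hK1 with h' | h'
      · exact h'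
      · exact absurd (Prod.ext h'.symm hq) hKne
    exact h ⟨K.1, Finset.mem_image_of_mem _ (Finset.mem_filter.2 ⟨hK, hq, hK1'⟩)⟩

lemma nested_of_mem {I J : ℤ × ℤ} (x : ℤ) (hI : I.1 < x ∧ x < I.2) (hJ : J.1 < x ∧ x < J.2)
    (h : ¬ Cross I J) : (I.1 ≤ J.1 ∧ J.2 ≤ I.2) ∨ (J.1 ≤ I.1 ∧ I.2 ≤ J.2) := by
  unfold Cross at h; omega

lemma Fz_injOn (C : Finset (ℤ × ℤ)) (hC1 : ∀ J ∈ C, J.1 + 2 ≤ J.2)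
    (hC2 : ∀ I ∈ C, ∀ J ∈ C, ¬ Cross I J) :
    Set.InjOn (Fz C) C := by
  intro I hI J hJ hEq
  simp only [Finset.mem_coe] at hI hJ
  by_contra hne
  obtain ⟨h1I, h2I, h3I⟩ := Fz_spec C hC1 hC2 I hI
  obtain ⟨h1J, h2J, h3J⟩ := Fz_spec C hC1 hC2 J hJ
  rw [← hEq] at h1J h2J h3J
  rcases nested_of_mem (Fz C I) ⟨h1I, h2I⟩ ⟨h1J, h2J⟩
      (hC2 I hI J hJ) with ⟨ha, hb⟩ | ⟨ha, hb⟩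
  · exact h3I J hJ (fun h => hne h.symm) ha hb ⟨h1J, h2J⟩
  · exact h3J I hI hne ha hb ⟨h1I, h2I⟩


/-- Extension lemma: a deficient noncrossing family of intervals can be extended. -/
lemma ext_interval (m : ℕ) : ∀ (A B : ℤ) (C : Finset (ℤ × ℤ)),
    (B - A).toNat ≤ m →
    (∀ I ∈ C, A ≤ I.1 ∧ I.1 + 2 ≤ I.2 ∧ I.2 ≤ B) →
    (∀ I ∈ C, ∀ J ∈ C, ¬ Cross I J) →
    (C.card : ℤ) < B - A - 1 →
    ∃ u v : ℤ, A ≤ u ∧ u + 2 ≤ v ∧ v ≤ B ∧ (u, v) ∉ C ∧ ∀ J ∈ C, ¬ Cross (u, v) J := by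
  induction m with
  | zero =>
    intro A B C hm hC1 hC2 hcard
    have : (0:ℤ) ≤ C.card := by positivity
    omega
  | succ m IH =>
    intro A B C hm hC1 hC2 hcard
    classical
    have hcard0 : (0:ℤ) ≤ C.card := by positivity
    by_cases h1 : (A, B) ∈ C
    · have hAB : A + 2 ≤ B := (hC1 _ h1).2.1
      have hcard1 : (1:ℤ) ≤ C.card := by
        exact_mod_cast Nat.one_le_iff_ne_zero.2 (Finset.card_ne_zero_of_mem h1)
      by_cases h2 : ∃ I ∈ C, I.2 = I.1 + 2
      · -- contract a length-2 member
        obtain ⟨I₀, hI₀C, hI₀len⟩ := h2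
        set u₀ := I₀.1 with hu₀
        have hI₀ : I₀ = (u₀, u₀ + 2) := by rw [hu₀]; exact Prod.ext rfl hI₀len
        -- no endpoint equals u₀ + 1
        have hnotep : ∀ K ∈ C, K.1 ≠ u₀ + 1 ∧ K.2 ≠ u₀ + 1 := by
          intro K hK
          have hKlen := (hC1 K hK).2.1
          have hni := hC2 K hK I₀ hI₀C
          have hni' := hC2 I₀ hI₀C K hK
          rw [hI₀] at hni hni'
          constructor
          · intro hp
            -- K = (u₀+1, q), q ≥ u₀+3 : crosses I₀
            exact hni (Or.inr ⟨by omega, by omega, by omega⟩)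
          · intro hq
            exact hni (Or.inl ⟨by omega, by omega, by omega⟩)
        have hI₀ne : I₀ ≠ (A, B) := by
          intro h
          have : (1:ℤ) * 2 ≤ C.card * 2 := by
            have := hcard1; nlinarith
          rw [hI₀] at h
          have := Prod.ext_iff.1 h
          omega
        set φ : ℤ → ℤ := fun x => if x ≤ u₀ then x else x - 1 with hφ
        set ψ : ℤ → ℤ := fun x => if x ≤ u₀ then x else x + 1 with hψ
        have hψmono : ∀ a b : ℤ, a < b ↔ ψ a < ψ b := by
          intro a b; simp only [hψ]; split_ifs <;> omega
        have hψφ : ∀ a : ℤ, a ≠ u₀ + 1 → ψ (φ a) = a := by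
          intro a ha; simp only [hφ, hψ]; split_ifs <;> omega
        have hψne : ∀ a : ℤ, ψ a ≠ u₀ + 1 := by
          intro a; simp only [hψ]; split_ifs <;> omega
        set C' := (C.erase I₀).image (fun I => (φ I.1, φ I.2)) with hC'
        have hinj : Set.InjOn (fun I : ℤ × ℤ => (φ I.1, φ I.2)) (C.erase I₀) := by
          intro K hK L hL hEq
          simp only [Finset.coe_erase, Set.mem_diff, Finset.mem_coe] at hK hL
          obtain ⟨hKe1, hKe2⟩ := hnotep K hK.1
          obtain ⟨hLe1, hLe2⟩ := hnotep L hL.1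
          have h1 := congrArg Prod.fst hEq
          have h2 := congrArg Prod.snd hEq
          simp only [hφ] at h1 h2
          have : K.1 = L.1 := by split_ifs at h1 <;> omega
          have : K.2 = L.2 := by split_ifs at h2 <;> omega
          exact Prod.ext ‹K.1 = L.1› ‹K.2 = L.2›
        have hcard' : (C'.card : ℤ) = C.card - 1 := by
          rw [hC', Finset.card_image_of_injOn hinj, Finset.card_erase_of_mem hI₀C]
          omega
        have hC'1 : ∀ I ∈ C', A ≤ I.1 ∧ I.1 + 2 ≤ I.2 ∧ I.2 ≤ B - 1 := by
          intro I hI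
          simp only [hC', Finset.mem_image, Finset.mem_erase] at hI
          obtain ⟨K, ⟨hKne, hKC⟩, hKI⟩ := hI
          obtain ⟨hb1, hb2, hb3⟩ := hC1 K hKC
          obtain ⟨he1, he2⟩ := hnotep K hKC
          have hKne' : K.1 ≠ u₀ ∨ K.2 ≠ u₀ + 2 := by
            by_contra h; push_neg at h
            exact hKne (by rw [hI₀]; exact Prod.ext h.1 h.2)
          have hAu : A ≤ u₀ := (hC1 I₀ hI₀C).1
          have hBu : u₀ + 2 ≤ B := by have := (hC1 I₀ hI₀C).2.2; omega
          rw [← hKI]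
          simp only [hφ]
          split_ifs <;> omega
        have hC'2 : ∀ I ∈ C', ∀ J ∈ C', ¬ Cross I J := by
          intro I hI J hJ hcross
          simp only [hC', Finset.mem_image, Finset.mem_erase] at hI hJ
          obtain ⟨K, ⟨hKne, hKC⟩, hKI⟩ := hI
          obtain ⟨L, ⟨hLne, hLC⟩, hLJ⟩ := hJ
          obtain ⟨hKe1, hKe2⟩ := hnotep K hKC
          obtain ⟨hLe1, hLe2⟩ := hnotep L hLC
          apply hC2 K hKC L hLC
          rw [← hKI, ← hLJ] at hcross
          unfold Cross at hcross ⊢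
          simp only [hφ] at hcross
          split_ifs at hcross <;> omega
        have hnext : (B - 1 - A).toNat ≤ m := by omega
        obtain ⟨u', v', ha1, ha2, ha3, ha4, ha5⟩ :=
          IH A (B - 1) C' hnext hC'1 hC'2 (by rw [hcard']; omega)
        refine ⟨ψ u', ψ v', ?_, ?_, ?_, ?_, ?_⟩
        · simp only [hψ]; split_ifs <;> omega
        · simp only [hψ]; split_ifs <;> omega
        · simp only [hψ]; split_ifs <;> omega
        · intro hmem
          by_cases hIeq : (ψ u', ψ v') = I₀
          · rw [hI₀] at hIeq
            have h1' := congrArg Prod.fst hIeq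
            have h2' := congrArg Prod.snd hIeq
            simp only [hψ] at h1' h2'
            split_ifs at h1' h2' <;> omega
          · apply ha4
            have hmem' : (ψ u', ψ v') ∈ C.erase I₀ := Finset.mem_erase.2 ⟨hIeq, hmem⟩
            have : (φ (ψ u'), φ (ψ v')) ∈ C' := by
              rw [hC']
              exact Finset.mem_image_of_mem _ hmem'
            have hφψ : ∀ a : ℤ, φ (ψ a) = a := by
              intro a; simp only [hφ, hψ]; split_ifs <;> omega
            rwa [hφψ, hφψ] at this
        · intro J hJ hcross
          by_cases hJeq : J = I₀
          · rw [hJeq, hI₀] at hcross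
            unfold Cross at hcross
            rcases hcross with ⟨hc1, hc2, hc3⟩ | ⟨hc1, hc2, hc3⟩
            · have := hψne v'; simp only at hc2 hc3; omega
            · have := hψne u'; simp only at hc2 hc3; omega
          · have hJer : J ∈ C.erase I₀ := Finset.mem_erase.2 ⟨hJeq, hJ⟩
            have hJC' : (φ J.1, φ J.2) ∈ C' := by rw [hC']; exact Finset.mem_image_of_mem _ hJer
            apply ha5 _ hJC'
            obtain ⟨he1, he2⟩ := hnotep J hJ
            unfold Cross at hcross ⊢
            rw [← hψφ J.1 he1, ← hψφ J.2 he2] at hcross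
            simp only [← hψmono] at hcross
            exact hcross
      · -- all members have length ≥ 3; take minimal one
        push_neg at h2
        obtain ⟨I₀, hI₀C, hI₀min⟩ := C.exists_min_image (fun I => I.2 - I.1) ⟨(A, B), h1⟩
        have hlen3 : ∀ I ∈ C, I.1 + 3 ≤ I.2 := by
          intro I hI
          have := (hC1 I hI).2.1
          have := h2 I hI
          omega
        have hI₀3 := hlen3 I₀ hI₀C
        refine ⟨I₀.1, I₀.1 + 2, (hC1 I₀ hI₀C).1, by omega,
          by have := (hC1 I₀ hI₀C).2.2; omega, ?_, ?_⟩
        · intro hmem; exact absurd (by simp : ((I₀.1, I₀.1+2) : ℤ×ℤ).2 = (I₀.1, I₀.1+2).1 + 2)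
            (h2 _ hmem)
        · intro J hJ hcross
          have hJ3 := hlen3 J hJ
          have hmin := hI₀min J hJ
          unfold Cross at hcross
          rcases hcross with ⟨hc1, hc2, hc3⟩ | ⟨hc1, hc2, hc3⟩
          · -- I₀.1 < J.1 < I₀.1+2 < J.2, so J.1 = I₀.1 + 1
            have hJ1 : J.1 = I₀.1 + 1 := by omega
            exact hC2 I₀ hI₀C J hJ (Or.inl ⟨by omega, by omega, by omega⟩)
          · have hJ2 : J.2 = I₀.1 + 1 := by omega
            exact hC2 J hJ I₀ hI₀C (Or.inl ⟨by omega, by omega, by omega⟩)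
    · -- (A,B) itself is addable
      have hAB : A + 2 ≤ B := by omega
      refine ⟨A, B, le_refl A, hAB, le_refl B, h1, ?_⟩
      intro J hJ hcross
      obtain ⟨hb1, hb2, hb3⟩ := hC1 J hJ
      unfold Cross at hcross
      omega

section Window
variable {n : ℕ} {X : Set (Arc n)}

/-- canonical right endpoint of an arc, inside the window `(y, y+n]`. -/
def rend (n : ℕ) (y : ℤ) (α : Arc n) : ℤ := Lft n y α.terminal

/-- canonical left endpoint. -/
def lend (n : ℕ) (y : ℤ) : Arc n → ℤ
  | .inner i t => Lft n y (i + (t : ZMod n)) - t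
  | .proj j => Lft n y j

/-- canonical interval. -/
def iv (n : ℕ) (y : ℤ) (α : Arc n) : ℤ × ℤ := (lend n y α, rend n y α)

lemma rend_inner (y : ℤ) (i : ZMod n) (t : ℕ) :
    rend n y (.inner i t) = lend n y (.inner i t) + t := by
  simp only [rend, lend, Arc.terminal]
  omega

lemma lend_inner_cast (hn : 0 < n) (y : ℤ) (i : ZMod n) (t : ℕ) :
    ((lend n y (.inner i t) : ℤ) : ZMod n) = i := by
  show (((Lft n y (i + (t : ZMod n)) - t : ℤ)) : ZMod n) = i
  push_cast
  rw [Lft_cast hn]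
  ring

lemma rend_bounds (hn : 0 < n) (y : ℤ) (α : Arc n) :
    y < rend n y α ∧ rend n y α ≤ y + n := Lft_mem hn y _

lemma rend_cast (hn : 0 < n) (y : ℤ) (α : Arc n) :
    ((rend n y α : ℤ) : ZMod n) = Arc.terminal α := Lft_cast hn y _

lemma no_cross_inner (hn : 0 < n) (y : ℤ) (hpc : PairwiseCompatible n X)
    {i k : ZMod n} {t s : ℕ}
    (h1 : Arc.inner i t ∈ X) (h2 : Arc.inner k s ∈ X) :
    ¬ Cross (iv n y (.inner i t)) (iv n y (.inner k s)) := by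
  intro hc
  have hcompat := hpc.2 _ h1 _ h2
  simp only [Arc.Compatible] at hcompat
  apply hcompat
  refine ⟨lend n y (.inner i t), lend n y (.inner k s),
    lend_inner_cast hn y i t, lend_inner_cast hn y k s, ?_⟩
  unfold Cross iv at hc
  rw [rend_inner, rend_inner] at hc
  exact hc

lemma no_inside (hn : 0 < n) (y : ℤ) (hpc : PairwiseCompatible n X)
    {i j : ZMod n} {t : ℕ} (h1 : Arc.inner i t ∈ X) (h2 : Arc.proj j ∈ X)
    (z : ℤ) (hz : (z : ZMod n) = j) :
    ¬ (lend n y (.inner i t) < z ∧ z < rend n y (.inner i t)) := by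
  rintro ⟨ha, hb⟩
  have hcompat := hpc.2 _ h1 _ h2
  simp only [Arc.Compatible] at hcompat
  apply hcompat
  rw [rend_inner] at hb
  exact ⟨lend n y (.inner i t), z, lend_inner_cast hn y i t, hz, ha, hb⟩

lemma lend_ge (hn : 0 < n) (y : ℤ) (hpc : PairwiseCompatible n X)
    (hy : Arc.proj ((y : ℤ) : ZMod n) ∈ X) {i : ZMod n} {t : ℕ}
    (h1 : Arc.inner i t ∈ X) : y ≤ lend n y (.inner i t) := by
  by_contra h
  push_neg at h
  exact no_inside hn y hpc h1 hy y rfl ⟨h, (rend_bounds hn y _).1⟩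

lemma lend_lt_rend (hn : 0 < n) (y : ℤ) (hpc : PairwiseCompatible n X)
    {i : ZMod n} {t : ℕ} (h1 : Arc.inner i t ∈ X) :
    lend n y (.inner i t) + 2 ≤ rend n y (.inner i t) := by
  rw [rend_inner]
  have := (hpc.1 _ h1)
  simp only [Arc.IsAdmissible] at this
  omega

lemma inner_eq_of_iv (hn : 0 < n) (y : ℤ) {i k : ZMod n} {t s : ℕ}
    (h : iv n y (.inner i t) = iv n y (.inner k s)) :
    Arc.inner i t = Arc.inner k s := by
  have h1 := congrArg Prod.fst h
  have h2 := congrArg Prod.snd h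
  simp only [iv] at h1 h2
  have hts : (t : ℤ) = (s : ℤ) := by
    have e1 := rend_inner (n := n) y i t
    have e2 := rend_inner (n := n) y k s
    omega
  have hik : i = k := by
    have hc := lend_inner_cast hn y i t
    rw [h1, lend_inner_cast hn y k s] at hc
    exact hc.symm
  have hts' : t = s := by exact_mod_cast hts
  subst hik; subst hts'; rfl

/-- The set of canonical intervals of the inner arcs of `X`. -/
noncomputable def Call (n : ℕ) (y : ℤ) (X : Set (Arc n)) (hXfin : X.Finite) :
    Finset (ℤ × ℤ) :=
  ((hXfin.subset (Set.sep_subset X (fun α => ∃ i t, α = Arc.inner i t))).image (iv n y)).toFinset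

lemma mem_Call {y : ℤ} {hXfin : X.Finite} {I : ℤ × ℤ} :
    I ∈ Call n y X hXfin ↔ ∃ i t, Arc.inner i t ∈ X ∧ iv n y (.inner i t) = I := by
  unfold Call
  rw [Set.Finite.mem_toFinset]
  constructor
  · rintro ⟨α, ⟨hαX, i, t, rfl⟩, hI⟩
    exact ⟨i, t, hαX, hI⟩
  · rintro ⟨i, t, hmem, hI⟩
    exact ⟨Arc.inner i t, ⟨hmem, i, t, rfl⟩, hI⟩

lemma Call_len (hn : 0 < n) {y : ℤ} {hXfin : X.Finite} (hpc : PairwiseCompatible n X) :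
    ∀ I ∈ Call n y X hXfin, I.1 + 2 ≤ I.2 := by
  intro I hI
  obtain ⟨i, t, hmem, rfl⟩ := mem_Call.1 hI
  exact lend_lt_rend hn y hpc hmem

lemma Call_nc (hn : 0 < n) {y : ℤ} {hXfin : X.Finite} (hpc : PairwiseCompatible n X) :
    ∀ I ∈ Call n y X hXfin, ∀ J ∈ Call n y X hXfin, ¬ Cross I J := by
  intro I hI J hJ
  obtain ⟨i, t, hmem, rfl⟩ := mem_Call.1 hI
  obtain ⟨k, s, hmem', rfl⟩ := mem_Call.1 hJ
  exact no_cross_inner hn y hpc hmem hmem'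

/-- The counting map: inner arcs go to the `Fz`-marker of their canonical interval,
projective arcs to their canonical lift. -/
noncomputable def Gmap (n : ℕ) (y : ℤ) (X : Set (Arc n)) (hXfin : X.Finite) : Arc n → ℤ
  | .inner i t => Fz (Call n y X hXfin) (iv n y (.inner i t))
  | .proj j => Lft n y j

lemma Gmap_inner_bounds (hn : 0 < n) {y : ℤ} (hXfin : X.Finite)
    (hpc : PairwiseCompatible n X) {i : ZMod n} {t : ℕ} (h1 : Arc.inner i t ∈ X) :
    lend n y (.inner i t) < Gmap n y X hXfin (.inner i t) ∧
      Gmap n y X hXfin (.inner i t) < rend n y (.inner i t) := by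
  have hI : iv n y (.inner i t) ∈ Call n y X hXfin := mem_Call.2 ⟨i, t, h1, rfl⟩
  have := Fz_spec _ (Call_len hn hpc) (Call_nc hn hpc) _ hI
  exact ⟨this.1, this.2.1⟩

/-- `Gmap` values of inner arcs are not lifts of projective vertices. -/
lemma Gmap_inner_not_proj (hn : 0 < n) {y : ℤ} (hXfin : X.Finite)
    (hpc : PairwiseCompatible n X) {i : ZMod n} {t : ℕ} (h1 : Arc.inner i t ∈ X) :
    ¬ Arc.proj ((Gmap n y X hXfin (.inner i t) : ℤ) : ZMod n) ∈ X := by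
  intro h2
  exact no_inside hn y hpc h1 h2 _ rfl (Gmap_inner_bounds hn hXfin hpc h1)

lemma Gmap_injOn (hn : 0 < n) {y : ℤ} (hXfin : X.Finite)
    (hpc : PairwiseCompatible n X) : Set.InjOn (Gmap n y X hXfin) X := by
  intro α hα β hβ hEq
  cases α with
  | inner i t =>
    cases β with
    | inner k s =>
      apply inner_eq_of_iv hn y
      apply Fz_injOn _ (Call_len hn hpc) (Call_nc hn hpc) _ _ hEq
      · exact mem_Call.2 ⟨i, t, hα, rfl⟩
      · exact mem_Call.2 ⟨k, s, hβ, rfl⟩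
    | proj j =>
      exfalso
      apply Gmap_inner_not_proj hn hXfin hpc hα
      have : Gmap n y X hXfin (.inner i t) = Lft n y j := hEq
      rw [this, Lft_cast hn]
      exact hβ
  | proj j =>
    cases β with
    | inner k s =>
      exfalso
      apply Gmap_inner_not_proj hn hXfin hpc hβ
      have : Gmap n y X hXfin (.inner k s) = Lft n y j := hEq.symm
      rw [this, Lft_cast hn]
      exact hα
    | proj j' =>
      have : ((Lft n y j : ℤ) : ZMod n) = ((Lft n y j' : ℤ) : ZMod n) := by
        show ((Gmap n y X hXfin (.proj j) : ℤ) : ZMod n) = _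
        rw [hEq]; rfl
      rw [Lft_cast hn, Lft_cast hn] at this
      rw [this]

/-- W1, case where `p` is a lift of a projective vertex. -/
lemma count_upper_mem (hn : 0 < n) {y : ℤ} (hXfin : X.Finite)
    (hpc : PairwiseCompatible n X) (hy : Arc.proj ((y : ℤ) : ZMod n) ∈ X)
    {p : ℤ} (hp1 : y < p) (hp2 : p ≤ y + n) :
    ({α ∈ X | rend n y α ≤ p}.ncard : ℤ) ≤ p - y := by
  have hGbd : ∀ α ∈ {α ∈ X | rend n y α ≤ p}, Gmap n y X hXfin α ∈
      ((Finset.Ioc y p : Finset ℤ) : Set ℤ) := by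
    rintro α ⟨hαX, hαp⟩
    rw [Finset.mem_coe, Finset.mem_Ioc]
    cases α with
    | inner i t =>
      have hb := Gmap_inner_bounds (y := y) hn hXfin hpc hαX
      have hl := lend_ge hn y hpc hy hαX
      omega
    | proj j =>
      have hb := rend_bounds hn y (Arc.proj j : Arc n)
      exact ⟨hb.1, hαp⟩
  have hle := Set.ncard_le_ncard_of_injOn _ hGbd
      ((Gmap_injOn hn hXfin hpc).mono (Set.sep_subset _ _)) (Set.toFinite _)
  rw [Set.ncard_coe_finset, Int.card_Ioc] at hle
  omega

/-- W1, case where `p` is not a lift of a projective vertex. -/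
lemma count_upper_notmem (hn : 0 < n) {y : ℤ} (hXfin : X.Finite)
    (hpc : PairwiseCompatible n X) (hy : Arc.proj ((y : ℤ) : ZMod n) ∈ X)
    {p : ℤ} (hp1 : y < p) (hp2 : p ≤ y + n)
    (hpnot : Arc.proj ((p : ℤ) : ZMod n) ∉ X) :
    ({α ∈ X | rend n y α ≤ p}.ncard : ℤ) ≤ p - y - 1 := by
  have hGbd : ∀ α ∈ {α ∈ X | rend n y α ≤ p}, Gmap n y X hXfin α ∈
      ((Finset.Ioo y p : Finset ℤ) : Set ℤ) := by
    rintro α ⟨hαX, hαp⟩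
    rw [Finset.mem_coe, Finset.mem_Ioo]
    cases α with
    | inner i t =>
      have hb := Gmap_inner_bounds (y := y) hn hXfin hpc hαX
      have hl := lend_ge hn y hpc hy hαX
      omega
    | proj j =>
      have hb := rend_bounds hn y (Arc.proj j : Arc n)
      have hGr : Gmap n y X hXfin (.proj j) = rend n y (.proj j) := rfl
      rw [hGr]
      refine ⟨hb.1, lt_of_le_of_ne hαp ?_⟩
      intro hEqp
      apply hpnot
      have hcst : ((rend n y (Arc.proj j) : ℤ) : ZMod n) = j := Lft_cast hn y j
      rw [hEqp] at hcst
      rw [hcst]; exact hαX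
  have hle := Set.ncard_le_ncard_of_injOn _ hGbd
      ((Gmap_injOn hn hXfin hpc).mono (Set.sep_subset _ _)) (Set.toFinite _)
  rw [Set.ncard_coe_finset, Int.card_Ioo] at hle
  omega

end Window

section Nonempty
variable {n : ℕ} {X : Set (Arc n)}

lemma exists_proj_mem (hn : 0 < n) (hX : IsTriangulation n X) :
    ∃ j : ZMod n, Arc.proj j ∈ X := by
  by_cases hInn : ∃ i t, Arc.inner i t ∈ X
  · -- take an inner arc of maximal length
    obtain ⟨i₁, t₁, h₁⟩ := hInn
    have hTfin : {t : ℕ | ∃ i : ZMod n, Arc.inner i t ∈ X}.Finite := by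
      apply (Set.finite_Iic n).subset
      rintro t ⟨i, hi⟩
      exact (hX.1.1 _ hi).2
    obtain ⟨t₀, ht₀, hmax'⟩ := Set.Finite.exists_maximalFor id _ hTfin ⟨t₁, i₁, h₁⟩
    have hmax : ∀ t ∈ {t : ℕ | ∃ i : ZMod n, Arc.inner i t ∈ X}, t ≤ t₀ := by
      intro t ht
      by_contra hlt
      push_neg at hlt
      have := hmax' ht hlt.le
      simp only [id] at this
      omega
    obtain ⟨i₀, hi₀⟩ := ht₀
    set v : ZMod n := i₀ + (t₀ : ZMod n) with hv
    have hcompat : ∀ b ∈ X, Arc.Compatible b (Arc.proj v) ∧ Arc.Compatible (Arc.proj v) b := by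
      intro b hb
      cases b with
      | proj j => exact ⟨trivial, trivial⟩
      | inner k s =>
        have hkey : ¬ ∃ x z : ℤ, (x : ZMod n) = k ∧ (z : ZMod n) = v ∧ x < z ∧ z < x + (s:ℤ) := by
          rintro ⟨x, z, hx, hz, h1, h2⟩
          have hs : s ≤ t₀ := hmax s ⟨k, hb⟩
          have hucast : ((z - t₀ : ℤ) : ZMod n) = i₀ := by
            push_cast
            rw [hz, hv]
            ring
          rcases lt_or_ge (z - t₀) x with hc | hc
          · exact hX.1.2 _ hb _ hi₀ ⟨x, z - (t₀:ℤ), hx, hucast,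
              Or.inr ⟨hc, by omega, by omega⟩⟩
          · omega
        exact ⟨hkey, hkey⟩
    have hpc : PairwiseCompatible n (insert (Arc.proj v) X) := by
      constructor
      · rintro a ha
        rcases Set.mem_insert_iff.1 ha with rfl | ha
        · trivial
        · exact hX.1.1 _ ha
      · rintro a ha b hb
        rcases Set.mem_insert_iff.1 ha with rfl | ha <;>
          rcases Set.mem_insert_iff.1 hb with rfl | hb
        · trivial
        · exact (hcompat b hb).2
        · exact (hcompat a ha).1
        · exact hX.1.2 a ha b hb
    have := hX.2 _ hpc (Set.subset_insert _ _)
    exact ⟨v, this ▸ Set.mem_insert _ _⟩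
  · -- no inner arcs at all: add `proj 0`
    push_neg at hInn
    have hpc : PairwiseCompatible n (insert (Arc.proj (0 : ZMod n)) X) := by
      constructor
      · rintro a ha
        rcases Set.mem_insert_iff.1 ha with rfl | ha
        · trivial
        · exact hX.1.1 _ ha
      · rintro a ha b hb
        have hproj : ∀ c ∈ insert (Arc.proj (0 : ZMod n)) X, ∃ j, c = Arc.proj j := by
          intro c hc
          rcases Set.mem_insert_iff.1 hc with rfl | hc
          · exact ⟨0, rfl⟩
          · cases c with
            | inner i t => exact absurd hc (hInn i t)
            | proj j => exact ⟨j, rfl⟩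
        obtain ⟨j1, rfl⟩ := hproj a ha
        obtain ⟨j2, rfl⟩ := hproj b hb
        trivial
    have := hX.2 _ hpc (Set.subset_insert _ _)
    exact ⟨0, this ▸ Set.mem_insert _ _⟩

end Nonempty

section Fullness
variable {n : ℕ} {X : Set (Arc n)}

/-- helper: `n*c` bounds. -/
lemma mul_bound {c : ℤ} (hn : 0 < n) (h1 : -(n:ℤ) < n * c) (h2 : n * c < n) : n * c = 0 := by
  have hn' : (0:ℤ) < n := by exact_mod_cast hn
  have ha : c ≤ -1 → (n:ℤ) * c ≤ -n := fun h => by nlinarith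
  have hb : 1 ≤ c → (n:ℤ) ≤ n * c := fun h => by nlinarith
  have hc : c = 0 → (n:ℤ) * c = 0 := fun h => by rw [h, mul_zero]
  omega

/-- Fullness of a segment between consecutive marked points, by maximality. -/
lemma segment_full (hn : 0 < n) (hX : IsTriangulation n X) (hXfin : X.Finite)
    {y : ℤ} (hy : Arc.proj ((y : ℤ) : ZMod n) ∈ X)
    {A B : ℤ} (hyA : y ≤ A) (hBn : B ≤ y + n) (hAB : A < B)
    (hAm : A = y ∨ Arc.proj ((A : ℤ) : ZMod n) ∈ X)
    (hBm : Arc.proj ((B : ℤ) : ZMod n) ∈ X)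
    (hfree : ∀ z : ℤ, A < z → z < B → Arc.proj ((z : ℤ) : ZMod n) ∉ X) :
    B - A - 1 ≤
      ({α ∈ X | (∃ i t, α = Arc.inner i t) ∧ A ≤ lend n y α ∧ rend n y α ≤ B}.ncard : ℤ) := by
  classical
  by_contra hdef
  push_neg at hdef
  set S := {α ∈ X | (∃ i t, α = Arc.inner i t) ∧ A ≤ lend n y α ∧ rend n y α ≤ B} with hS
  have hSfin : S.Finite := hXfin.subset (Set.sep_subset _ _)
  have hSsubX : S ⊆ X := Set.sep_subset _ _
  set Cs : Finset (ℤ × ℤ) := (hSfin.image (iv n y)).toFinset with hCs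
  have hmemCs : ∀ {I : ℤ × ℤ}, I ∈ Cs ↔ ∃ α ∈ S, iv n y α = I := by
    intro I
    rw [hCs, Set.Finite.mem_toFinset]
    constructor
    · rintro ⟨α, hα, hI⟩; exact ⟨α, hα, hI⟩
    · rintro ⟨α, hα, hI⟩; exact ⟨α, hα, hI⟩
  have hivinj : Set.InjOn (iv n y) S := by
    rintro α ⟨hαX, ⟨i, t, rfl⟩, hα⟩ β ⟨hβX, ⟨k, s, rfl⟩, hβ⟩ hEq
    exact inner_eq_of_iv hn y hEq
  have hCscard : (Cs.card : ℤ) = (S.ncard : ℤ) := by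
    have h1 : Cs.card = (iv n y '' S).ncard := by
      rw [hCs, ← Set.ncard_eq_toFinset_card _ (hSfin.image (iv n y))]
    rw [h1, Set.ncard_image_of_injOn hivinj]
  have hCs1 : ∀ I ∈ Cs, A ≤ I.1 ∧ I.1 + 2 ≤ I.2 ∧ I.2 ≤ B := by
    intro I hI
    obtain ⟨α, ⟨hαX, ⟨i, t, rfl⟩, h1, h2⟩, rfl⟩ := hmemCs.1 hI
    exact ⟨h1, lend_lt_rend hn y hX.1 hαX, h2⟩
  have hCs2 : ∀ I ∈ Cs, ∀ J ∈ Cs, ¬ Cross I J := by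
    intro I hI J hJ
    obtain ⟨α, ⟨hαX, ⟨i, t, rfl⟩, _, _⟩, rfl⟩ := hmemCs.1 hI
    obtain ⟨β, ⟨hβX, ⟨k, s, rfl⟩, _, _⟩, rfl⟩ := hmemCs.1 hJ
    exact no_cross_inner hn y hX.1 hαX hβX
  obtain ⟨u, v, hu1, huv, hv1, hnotin, hnc⟩ :=
    ext_interval (B - A).toNat A B Cs le_rfl hCs1 hCs2 (by omega)
  -- the new arc
  set t : ℕ := (v - u).toNat with ht
  have htv : (t : ℤ) = v - u := Int.toNat_of_nonneg (by omega)
  set w : Arc n := Arc.inner ((u : ℤ) : ZMod n) t with hw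
  have htadm : 2 ≤ t ∧ t ≤ n := by constructor <;> omega
  have hvwin : y < v ∧ v ≤ y + n := ⟨by omega, by omega⟩
  have hcastv : (((u : ℤ) : ZMod n) + ((t : ℕ) : ZMod n)) = ((v : ℤ) : ZMod n) := by
    have : ((v : ℤ) : ZMod n) = ((u + (t : ℤ) : ℤ) : ZMod n) := by rw [htv]; norm_num
    rw [this]
    push_cast
    ring
  have hrendw : rend n y w = v := by
    rw [hw]
    show Lft n y (Arc.terminal (Arc.inner ((u : ℤ) : ZMod n) t)) = v
    have : Arc.terminal (Arc.inner ((u : ℤ) : ZMod n) t) = ((v : ℤ) : ZMod n) := by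
      simp only [Arc.terminal]; exact hcastv
    rw [this]
    exact (Lft_unique hn y _ rfl hvwin.1 hvwin.2).symm
  have hlendw : lend n y w = u := by
    have := rend_inner (n := n) y ((u : ℤ) : ZMod n) t
    rw [← hw] at this
    omega
  -- compatibility of the new arc with members of X
  have hcompat : ∀ b ∈ X, Arc.Compatible w b ∧ Arc.Compatible b w := by
    intro b hb
    cases b with
    | proj j =>
      have hkey : ¬ ∃ x z : ℤ, (x : ZMod n) = ((u : ℤ) : ZMod n) ∧ (z : ZMod n) = j ∧
          x < z ∧ z < x + (t : ℤ) := by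
        rintro ⟨x, z, hx, hz, h1, h2⟩
        have hdvd : (n : ℤ) ∣ x - u := by
          have := (ZMod.intCast_eq_intCast_iff' x u n).1 hx
          exact Int.ModEq.dvd this.symm
        obtain ⟨a, hadef⟩ := hdvd
        set z' : ℤ := z - n * a with hz'
        have hz'cast : ((z' : ℤ) : ZMod n) = j := by
          rw [hz']
          push_cast
          rw [ZMod.natCast_self]
          rw [← hz]; ring
        have : A < z' ∧ z' < B := by constructor <;> omega
        exact hfree z' this.1 this.2 (hz'cast ▸ hb)
      rw [hw]
      exact ⟨hkey, hkey⟩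
    | inner k s =>
      have hsadm := hX.1.1 _ hb
      simp only [Arc.IsAdmissible] at hsadm
      set lb := lend n y (Arc.inner k s) with hlb
      set rb := rend n y (Arc.inner k s) with hrb
      have hrblb : rb = lb + s := rend_inner y k s
      have hlbcast : ((lb : ℤ) : ZMod n) = k := lend_inner_cast hn y k s
      have hlbge : y ≤ lb := lend_ge hn y hX.1 hy hb
      have hrble : rb ≤ y + n := (rend_bounds hn y _).2
      have hlen : lb + 2 ≤ rb := lend_lt_rend hn y hX.1 hb
      -- the canonical interval of `b` does not cross `(u,v)` and is not cut by marked pts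
      have hmain : ¬ Cross (u, v) (lb, rb) := by
        intro hcr
        rcases hcr with ⟨hc1, hc2, hc3⟩ | ⟨hc1, hc2, hc3⟩
        · -- u < lb < v < rb
          rcases lt_or_ge B rb with hBrb | hBrb
          · exact no_inside hn y hX.1 hb hBm B rfl ⟨by omega, by omega⟩
          · have : iv n y (Arc.inner k s) ∈ Cs :=
              hmemCs.2 ⟨Arc.inner k s, ⟨hb, ⟨k, s, rfl⟩, by omega, by omega⟩, rfl⟩
            exact hnc _ this (Or.inl ⟨hc1, hc2, hc3⟩)
        · -- lb < u < rb < v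
          rcases lt_or_ge lb A with hlbA | hlbA
          · rcases hAm with rfl | hAm
            · omega
            · exact no_inside hn y hX.1 hb hAm A rfl ⟨by omega, by omega⟩
          · have : iv n y (Arc.inner k s) ∈ Cs :=
              hmemCs.2 ⟨Arc.inner k s, ⟨hb, ⟨k, s, rfl⟩, hlbA, by omega⟩, rfl⟩
            exact hnc _ this (Or.inr ⟨hc1, hc2, hc3⟩)
      have hkey : ¬ ∃ x z : ℤ, (x : ZMod n) = ((u : ℤ) : ZMod n) ∧ (z : ZMod n) = k ∧
          ((x < z ∧ z < x + (t : ℤ) ∧ x + (t : ℤ) < z + (s : ℤ)) ∨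
           (z < x ∧ x < z + (s : ℤ) ∧ z + (s : ℤ) < x + (t : ℤ))) := by
        rintro ⟨x, z, hx, hz, hpat⟩
        have hdvd : (n : ℤ) ∣ x - u := by
          have := (ZMod.intCast_eq_intCast_iff' x u n).1 hx
          exact Int.ModEq.dvd this.symm
        obtain ⟨a, hadef⟩ := hdvd
        have hdvd2 : (n : ℤ) ∣ z - lb := by
          have : ((z : ℤ) : ZMod n) = ((lb : ℤ) : ZMod n) := by rw [hz, hlbcast]
          have := (ZMod.intCast_eq_intCast_iff' z lb n).1 this
          exact Int.ModEq.dvd this.symm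
        obtain ⟨c', hcdef⟩ := hdvd2
        -- normalize: subtract n*a
        set W : ℤ := lb + n * (c' - a) with hW
        have hWz : W = z - n * a := by rw [hW]; ring_nf; omega
        rcases hpat with ⟨hp1, hp2, hp3⟩ | ⟨hp1, hp2, hp3⟩
        · -- u < W < v < W + s
          have h1 : u < W := by omega
          have h2 : W < v := by omega
          have h3 : v < W + s := by omega
          have hc0 : (n : ℤ) * (c' - a) = 0 :=
            mul_bound hn (by omega) (by omega)
          apply hmain
          exact Or.inl ⟨by omega, by omega, by omega⟩
        · -- W < u < W + s < v
          have h1 : W < u := by omega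
          have h2 : u < W + s := by omega
          have h3 : W + s < v := by omega
          have hc0 : (n : ℤ) * (c' - a) = 0 :=
            mul_bound hn (by omega) (by omega)
          apply hmain
          exact Or.inr ⟨by omega, by omega, by omega⟩
      constructor
      · rw [hw]; exact hkey
      · rw [hw]
        intro hx
        apply hkey
        obtain ⟨x, z, h1, h2, hor⟩ := hx
        exact ⟨z, x, h2, h1, Or.symm hor⟩
  have hself : Arc.Compatible w w := by
    rw [hw]
    rintro ⟨x, z, hx, hz, hpat⟩
    have hdvd : (n : ℤ) ∣ z - x := by
      have : ((z : ℤ) : ZMod n) = ((x : ℤ) : ZMod n) := by rw [hz, hx]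
      have := (ZMod.intCast_eq_intCast_iff' z x n).1 this
      exact Int.ModEq.dvd this.symm
    obtain ⟨c', hcdef⟩ := hdvd
    have := mul_bound (c := c') hn (by omega) (by omega)
    omega
  have hpc : PairwiseCompatible n (insert w X) := by
    constructor
    · rintro a ha
      rcases Set.mem_insert_iff.1 ha with rfl | ha
      · rw [hw]; exact htadm
      · exact hX.1.1 _ ha
    · rintro a ha b hb
      rcases Set.mem_insert_iff.1 ha with rfl | ha <;>
        rcases Set.mem_insert_iff.1 hb with rfl | hb
      · exact hself
      · exact (hcompat b hb).1
      · exact (hcompat a ha).2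
      · exact hX.1.2 a ha b hb
  have hYX := hX.2 _ hpc (Set.subset_insert _ _)
  have hwX : w ∈ X := hYX ▸ Set.mem_insert _ _
  apply hnotin
  apply hmemCs.2
  refine ⟨w, ⟨hwX, ⟨_, _, hw⟩, ?_, ?_⟩, ?_⟩
  · omega
  · omega
  · rw [iv, hlendw, hrendw]

end Fullness

section CardN
variable {n : ℕ} {X : Set (Arc n)}

lemma rend_proj_marked (hn : 0 < n) {y B : ℤ} (hyB : y < B) (hBn : B ≤ y + n) :
    rend n y (Arc.proj ((B : ℤ) : ZMod n)) = B :=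
  (Lft_unique hn y _ rfl hyB hBn).symm

/-- lower bound: the number of arcs with right end at most a marked point `B`. -/
lemma count_lower (hn : 0 < n) (hX : IsTriangulation n X) (hXfin : X.Finite)
    {y : ℤ} (hy : Arc.proj ((y : ℤ) : ZMod n) ∈ X) :
    ∀ m : ℕ, ∀ B : ℤ, (B - y).toNat ≤ m → y ≤ B → B ≤ y + n →
    (B = y ∨ Arc.proj ((B : ℤ) : ZMod n) ∈ X) →
    B - y ≤ ({α ∈ X | rend n y α ≤ B}.ncard : ℤ) := by
  intro m
  induction m with
  | zero =>
    intro B hm h1 h2 _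
    have hBy : B = y := by omega
    calc B - y ≤ 0 := by omega
    _ ≤ _ := Int.ofNat_nonneg _
  | succ m IH =>
    intro B hm h1 h2 hBm
    rcases eq_or_lt_of_le h1 with rfl | hyB
    · calc y - y ≤ 0 := by omega
      _ ≤ _ := Int.ofNat_nonneg _
    have hBproj : Arc.proj ((B : ℤ) : ZMod n) ∈ X := by
      rcases hBm with rfl | h
      · omega
      · exact h
    -- the preceding marked point
    set MB := {z : ℤ | y ≤ z ∧ z < B ∧ (z = y ∨ Arc.proj ((z : ℤ) : ZMod n) ∈ X)} with hMB
    have hMBfin : MB.Finite := by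
      apply (Set.finite_Icc y (B - 1)).subset
      rintro z ⟨hz1, hz2, _⟩
      exact Set.mem_Icc.2 ⟨hz1, by omega⟩
    have hMBne : MB.Nonempty := ⟨y, le_rfl, hyB, Or.inl rfl⟩
    obtain ⟨A, hAmem, hAmax'⟩ := Set.Finite.exists_maximalFor id _ hMBfin hMBne
    obtain ⟨hyA, hAB, hAm⟩ := hAmem
    have hAmax : ∀ z ∈ MB, z ≤ A := by
      intro z hz
      by_contra hlt
      push_neg at hlt
      have := hAmax' hz hlt.le
      simp only [id] at this
      omega
    have hfree : ∀ z : ℤ, A < z → z < B → Arc.proj ((z : ℤ) : ZMod n) ∉ X := by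
      intro z hz1 hz2 hzX
      have : z ∈ MB := ⟨by omega, hz2, Or.inr hzX⟩
      exact absurd (hAmax z this) (by omega)
    have hfull := segment_full hn hX hXfin hy hyA h2 hAB hAm hBproj hfree
    have hIH := IH A (by omega) hyA (by omega) hAm
    -- assemble the three disjoint families
    set T1 := {α ∈ X | rend n y α ≤ A} with hT1
    set T2 := {α ∈ X | (∃ i t, α = Arc.inner i t) ∧ A ≤ lend n y α ∧ rend n y α ≤ B} with hT2
    set e : Arc n := Arc.proj ((B : ℤ) : ZMod n) with he
    have hrendE : rend n y e = B := rend_proj_marked hn hyB h2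
    have hsub : insert e (T1 ∪ T2) ⊆ {α ∈ X | rend n y α ≤ B} := by
      rintro α hα
      rcases Set.mem_insert_iff.1 hα with rfl | hα
      · exact ⟨hBproj, le_of_eq hrendE⟩
      rcases hα with ⟨hαX, hr⟩ | ⟨hαX, _, _, hr⟩
      · exact ⟨hαX, by omega⟩
      · exact ⟨hαX, hr⟩
    have hT2rend : ∀ α ∈ T2, A < rend n y α := by
      rintro α ⟨hαX, ⟨i, t, rfl⟩, hl, hr⟩
      have := lend_lt_rend hn y hX.1 hαX
      omega
    have hdisj : Disjoint T1 T2 := by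
      rw [Set.disjoint_left]
      rintro α ⟨hαX, hr⟩ hα2
      exact absurd (hT2rend α hα2) (by omega)
    have heT1 : e ∉ T1 := by
      rintro ⟨_, hr⟩
      rw [hrendE] at hr
      omega
    have heT2 : e ∉ T2 := by
      rintro ⟨_, ⟨i, t, habs⟩, _⟩
      rw [he] at habs
      cases habs
    have hT1fin : T1.Finite := hXfin.subset (Set.sep_subset _ _)
    have hT2fin : T2.Finite := hXfin.subset (Set.sep_subset _ _)
    have hcount : ({α ∈ X | rend n y α ≤ B}.ncard : ℤ) ≥
        (T1.ncard : ℤ) + (T2.ncard : ℤ) + 1 := by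
      have h1 : (insert e (T1 ∪ T2)).ncard = (T1 ∪ T2).ncard + 1 :=
        Set.ncard_insert_of_notMem (by
          rintro (h | h)
          exacts [heT1 h, heT2 h]) (hT1fin.union hT2fin)
      have h2' : (T1 ∪ T2).ncard = T1.ncard + T2.ncard :=
        Set.ncard_union_eq hdisj hT1fin hT2fin
      have h3 : (insert e (T1 ∪ T2)).ncard ≤ {α ∈ X | rend n y α ≤ B}.ncard :=
        Set.ncard_le_ncard hsub (hXfin.subset (Set.sep_subset _ _))
      omega
    omega

/-- The cardinality of a triangulation is exactly `n`. -/
lemma card_eq_n (hn : 0 < n) (hX : IsTriangulation n X) (hXfin : X.Finite)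
    {y : ℤ} (hy : Arc.proj ((y : ℤ) : ZMod n) ∈ X) :
    (X.ncard : ℤ) = n := by
  have hcast : (((y + n : ℤ)) : ZMod n) = ((y : ℤ) : ZMod n) := by
    push_cast
    rw [ZMod.natCast_self]
    ring
  have hXeq : {α ∈ X | rend n y α ≤ y + n} = X := by
    ext α
    exact ⟨fun h => h.1, fun h => ⟨h, (rend_bounds hn y α).2⟩⟩
  have hlow := count_lower hn hX hXfin hy (n : ℕ) (y + n) (by omega) (by omega) le_rfl
    (Or.inr (by rw [hcast]; exact hy))
  have hupp := count_upper_mem hn hXfin hX.1 hy (p := y + n) (by omega) le_rfl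
  rw [hXeq] at hlow hupp
  omega

end CardN

section Psum
variable {n : ℕ} {X : Set (Arc n)}

lemma resRep_pred (hn : 0 < n) (p : ℤ) :
    resRep n (p - 1) = if resRep n p = 1 then n else resRep n p - 1 := by
  have hm := resRep_mem hn p
  have hc := resRep_cast hn p
  split_ifs with h1
  · apply resRep_unique hn (p - 1) hn le_rfl
    have : ((p : ℤ) : ZMod n) = 1 := by
      rw [← hc, h1]
      norm_num
    push_cast
    rw [ZMod.natCast_self, this]
    ring
  · apply resRep_unique hn (p - 1) (by omega) (by omega)
    have hc' : ((resRep n p : ℕ) : ZMod n) = ((p : ℤ) : ZMod n) := by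
      rw [← hc]; push_cast; ring
    push_cast [Nat.cast_sub hm.1]
    rw [hc']

lemma psum_step (hn : 0 < n) {a : ZMod n → ℕ}
    (htot : ∑ j ∈ Finset.Icc 1 n, ((a ((j : ℕ) : ZMod n) : ℤ) - 1) = 0) (p : ℤ) :
    psum n a p = psum n a (p - 1) + ((a ((p : ℤ) : ZMod n) : ℤ) - 1) := by
  have hm := resRep_mem hn p
  have hc := resRep_cast hn p
  have hterm : ((resRep n p : ℕ) : ZMod n) = ((p : ℤ) : ZMod n) := by
    rw [← hc]; push_cast; ring
  unfold psum
  rw [resRep_pred hn p]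
  split_ifs with h1
  · rw [htot, h1]
    rw [show Finset.Icc 1 1 = {1} from rfl, Finset.sum_singleton]
    rw [← h1, hterm]
    ring
  · obtain ⟨r, hr⟩ : ∃ r, resRep n p = r + 1 := ⟨resRep n p - 1, by omega⟩
    rw [hr] at hterm ⊢
    have hsplit : Finset.Icc 1 (r + 1) = insert (r + 1) (Finset.Icc 1 r) :=
      (Finset.insert_Icc_right_eq_Icc_add_one (by omega)).symm
    rw [show r + 1 - 1 = r from rfl, hsplit, Finset.sum_insert (by simp), hterm]
    ring

lemma psum_sum (hn : 0 < n) {a : ZMod n → ℕ}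
    (htot : ∑ j ∈ Finset.Icc 1 n, ((a ((j : ℕ) : ZMod n) : ℤ) - 1) = 0) (y : ℤ) :
    ∀ k : ℕ, psum n a (y + k) =
      psum n a y + ∑ j ∈ Finset.Icc 1 k, ((a (((y + j : ℤ)) : ZMod n) : ℤ) - 1) := by
  intro k
  induction k with
  | zero => simp
  | succ k IH =>
    have hstep := psum_step hn htot (y + (k + 1 : ℕ))
    have h1 : (y + ((k + 1 : ℕ) : ℤ)) - 1 = y + (k : ℕ) := by push_cast; ring
    rw [h1] at hstep
    rw [hstep, IH]
    have hsplit : Finset.Icc 1 (k + 1) = insert (k + 1) (Finset.Icc 1 k) :=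
      (Finset.insert_Icc_right_eq_Icc_add_one (by omega)).symm
    rw [hsplit, Finset.sum_insert (by simp)]
    push_cast
    ring

/-- The count of arcs with right end `≤ p` as a partial sum of `topSeq`. -/
lemma count_sum (hn : 0 < n) (hXfin : X.Finite) {y : ℤ} :
    ∀ k : ℕ, k ≤ n →
      ({α ∈ X | rend n y α ≤ y + k}.ncard : ℤ) =
        ∑ j ∈ Finset.Icc 1 k, (topSeq n X (((y + j : ℤ)) : ZMod n) : ℤ) := by
  intro k
  induction k with
  | zero =>
    intro _
    have : {α ∈ X | rend n y α ≤ y + (0:ℕ)} = ∅ := by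
      ext α
      simp only [Set.mem_setOf_eq, Set.mem_empty_iff_false, iff_false, not_and, not_le]
      intro hα
      have := (rend_bounds hn y α).1
      push_cast
      omega
    rw [this]
    simp
  | succ k IH =>
    intro hk
    set p : ℤ := y + (k + 1 : ℕ) with hp
    have hyp : y < p ∧ p ≤ y + n := by constructor <;> [push_cast; skip] <;> omega
    have hsetEq : {α ∈ X | rend n y α ≤ p} =
        {α ∈ X | rend n y α ≤ y + k} ∪ {α ∈ X | Arc.terminal α = ((p : ℤ) : ZMod n)} := by
      ext α
      simp only [Set.mem_setOf_eq, Set.mem_union]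
      constructor
      · rintro ⟨hαX, hr⟩
        rcases eq_or_lt_of_le hr with heq | hlt
        · right
          refine ⟨hαX, ?_⟩
          have := Lft_cast hn y (Arc.terminal α)
          rw [show Lft n y (Arc.terminal α) = rend n y α from rfl, heq] at this
          exact this.symm
        · left
          refine ⟨hαX, ?_⟩
          have : ((k:ℤ)+1) = ((k+1:ℕ):ℤ) := by push_cast; ring
          omega
      · rintro (⟨hαX, hr⟩ | ⟨hαX, ht⟩)
        · refine ⟨hαX, ?_⟩
          have : ((k:ℤ)+1) = ((k+1:ℕ):ℤ) := by push_cast; ring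
          omega
        · refine ⟨hαX, ?_⟩
          have : rend n y α = p := by
            show Lft n y (Arc.terminal α) = p
            rw [ht]
            exact (Lft_unique hn y _ rfl hyp.1 hyp.2).symm
          omega
    have hdisj : Disjoint {α ∈ X | rend n y α ≤ y + k}
        {α ∈ X | Arc.terminal α = ((p : ℤ) : ZMod n)} := by
      rw [Set.disjoint_left]
      rintro α ⟨hαX, hr⟩ ⟨_, ht⟩
      have : rend n y α = p := by
        show Lft n y (Arc.terminal α) = p
        rw [ht]
        exact (Lft_unique hn y _ rfl hyp.1 hyp.2).symm
      have : ((k:ℤ)+1) = ((k+1:ℕ):ℤ) := by push_cast; ring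
      omega
    have hcard : {α ∈ X | rend n y α ≤ p}.ncard =
        {α ∈ X | rend n y α ≤ y + k}.ncard +
          {α ∈ X | Arc.terminal α = ((p : ℤ) : ZMod n)}.ncard := by
      rw [hsetEq]
      exact Set.ncard_union_eq hdisj (hXfin.subset (Set.sep_subset _ _))
        (hXfin.subset (Set.sep_subset _ _))
    have hsplit : Finset.Icc 1 (k + 1) = insert (k + 1) (Finset.Icc 1 k) :=
      (Finset.insert_Icc_right_eq_Icc_add_one (by omega)).symm
    rw [hsplit, Finset.sum_insert (by simp)]
    have htop : (topSeq n X (((y + (((k:ℕ) + 1 : ℕ) : ℤ) : ℤ)) : ZMod n) : ℤ) =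
        ({α ∈ X | Arc.terminal α = ((p : ℤ) : ZMod n)}.ncard : ℤ) := by
      rw [← hp]
      rfl
    have IH' := IH (by omega)
    rw [hcard]
    push_cast at htop IH' ⊢
    rw [IH', htop]
    ring

end Psum

section Final
variable {n : ℕ} {X : Set (Arc n)}

lemma sum_top_period (hn : 0 < n) (hXfin : X.Finite) (y : ℤ) :
    ∑ j ∈ Finset.Icc 1 n, (topSeq n X ((j : ℕ) : ZMod n) : ℤ) = (X.ncard : ℤ) := by
  have hXeq : {α ∈ X | rend n y α ≤ y + n} = X := by
    ext α
    exact ⟨fun h => h.1, fun h => ⟨h, (rend_bounds hn y α).2⟩⟩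
  have hcs := count_sum hn hXfin (y := y) n le_rfl
  rw [hXeq] at hcs
  rw [hcs]
  apply Finset.sum_nbij' (i := fun j : ℕ => resRep n ((j : ℤ) - y))
    (j := fun j : ℕ => resRep n ((j : ℤ) + y))
  · intro a ha
    have := resRep_mem hn ((a : ℤ) - y)
    exact Finset.mem_Icc.2 ⟨this.1, this.2⟩
  · intro a ha
    have := resRep_mem hn ((a : ℤ) + y)
    exact Finset.mem_Icc.2 ⟨this.1, this.2⟩
  · intro a ha
    rw [Finset.mem_Icc] at ha
    apply resRep_unique hn _ ha.1 ha.2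
    push_cast
    rw [resRep_cast' hn]
    push_cast
    ring
  · intro a ha
    rw [Finset.mem_Icc] at ha
    apply resRep_unique hn _ ha.1 ha.2
    push_cast
    rw [resRep_cast' hn]
    push_cast
    ring
  · intro a ha
    have harg : (((a : ℕ)) : ZMod n) =
        (((y + (resRep n ((a:ℤ) - y) : ℤ)) : ℤ) : ZMod n) := by
      push_cast
      rw [resRep_cast' hn]
      push_cast
      ring
    rw [harg]

/-- The main window estimate packaged via `psum`. -/
lemma psum_window (hn : 0 < n) (hX : IsTriangulation n X) (hXfin : X.Finite)
    {y : ℤ} (hy : Arc.proj ((y : ℤ) : ZMod n) ∈ X) :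
    ∀ p : ℤ, y < p → p ≤ y + n →
      (Arc.proj ((p : ℤ) : ZMod n) ∈ X → psum n (topSeq n X) p = psum n (topSeq n X) y) ∧
      (Arc.proj ((p : ℤ) : ZMod n) ∉ X → psum n (topSeq n X) p < psum n (topSeq n X) y) := by
  have hcardn := card_eq_n hn hX hXfin hy
  have htot : ∑ j ∈ Finset.Icc 1 n, ((topSeq n X ((j : ℕ) : ZMod n) : ℤ) - 1) = 0 := by
    rw [Finset.sum_sub_distrib, sum_top_period hn hXfin y, Finset.sum_const,
      Nat.card_Icc]
    simp
    omega
  -- identity : count = psum difference + (p - y)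
  have hiden : ∀ p : ℤ, y < p → p ≤ y + n →
      ({α ∈ X | rend n y α ≤ p}.ncard : ℤ) = psum n (topSeq n X) p - psum n (topSeq n X) y + (p - y) := by
    intro p hp1 hp2
    obtain ⟨k, hk⟩ : ∃ k : ℕ, p = y + k := ⟨(p - y).toNat, by omega⟩
    have hkn : k ≤ n := by omega
    have hsum := count_sum hn hXfin (y := y) k hkn
    have hpsum := psum_sum hn htot y k
    rw [← hk] at hsum hpsum
    rw [hsum, hpsum, Finset.sum_sub_distrib, Finset.sum_const, Nat.card_Icc]
    simp
    omega
  intro p hp1 hp2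
  constructor
  · intro hpX
    -- upper bound
    have hupp := count_upper_mem hn hXfin hX.1 hy hp1 hp2
    -- lower bound via the complementary count from base p
    have hlow : p - y ≤ ({α ∈ X | rend n y α ≤ p}.ncard : ℤ) := by
      rcases eq_or_lt_of_le hp2 with rfl | hps
      · have hXeq : {α ∈ X | rend n y α ≤ y + n} = X := by
          ext α
          exact ⟨fun h => h.1, fun h => ⟨h, (rend_bounds hn y α).2⟩⟩
        rw [hXeq]
        omega
      · -- split X by `rend n y α ≤ p`
        have hsplit : X = {α ∈ X | rend n y α ≤ p} ∪ {α ∈ X | rend n p α ≤ y + n} := by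
          ext α
          simp only [Set.mem_union, Set.mem_setOf_eq]
          constructor
          · intro hα
            rcases le_or_gt (rend n y α) p with h | h
            · exact Or.inl ⟨hα, h⟩
            · refine Or.inr ⟨hα, ?_⟩
              have hb := rend_bounds hn y α
              have h2' : rend n y α ≤ p + (n:ℤ) := by omega
              have : rend n p α = rend n y α :=
                (Lft_unique hn p (Arc.terminal α) (rend_cast hn y α) h h2').symm
              omega
          · rintro (⟨hα, _⟩ | ⟨hα, _⟩) <;> exact hα
        have hdisj : Disjoint {α ∈ X | rend n y α ≤ p} {α ∈ X | rend n p α ≤ y + n} := by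
          rw [Set.disjoint_left]
          rintro α ⟨hαX, hr⟩ ⟨_, hr2⟩
          have hb := rend_bounds hn y α
          have hcast2 : ((rend n y α + n : ℤ) : ZMod n) = Arc.terminal α := by
            push_cast
            rw [ZMod.natCast_self, ← rend_cast hn y α]
            push_cast
            ring
          have : rend n p α = rend n y α + n :=
            (Lft_unique hn p (Arc.terminal α) hcast2 (by omega) (by omega)).symm
          omega
        have hcnt : (X.ncard : ℤ) =
            ({α ∈ X | rend n y α ≤ p}.ncard : ℤ) + ({α ∈ X | rend n p α ≤ y + n}.ncard : ℤ) := by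
          have hu := Set.ncard_union_eq hdisj (hXfin.subset (Set.sep_subset _ _))
            (hXfin.subset (Set.sep_subset _ _))
          rw [← hsplit] at hu
          push_cast [hu]
          ring
        have hupp2 := count_upper_mem hn hXfin hX.1 hpX (p := y + n) (by omega) (by omega)
        -- note : ((y+n : ℤ) : ZMod n) = (y : ZMod n) so the marked hypothesis holds
        omega
    have := hiden p hp1 hp2
    omega
  · intro hpX
    have hupp := count_upper_notmem hn hXfin hX.1 hy hp1 hp2 hpX
    have := hiden p hp1 hp2
    omega

end Final

/-- **Adachi, Lemma (newlem1)(1).** Let `X` be a triangulation of the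
punctured `n`-gon and `a := top(X)`. For every `j ∈ {1, …, n}`, the
projective arc at the residue class of `j` belongs to `X` if and only if
`a'_j = ‖a'‖`. -/
theorem proj_mem_iff_psum_eq_pnorm (n : ℕ) (hn : 0 < n)
    (X : Set (Arc n)) (hX : IsTriangulation n X)
    (j : ℕ) (hj : j ∈ Finset.Icc 1 n) :
    Arc.proj ((j : ℕ) : ZMod n) ∈ X ↔
      psum n (topSeq n X) (j : ℤ) = pnorm n (topSeq n X) := by
  classical
  haveI : NeZero n := ⟨hn.ne'⟩
  have hXfin := finite_of_pc hn hX.1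
  obtain ⟨j₀, hj₀⟩ := exists_proj_mem hn hX
  set y : ℤ := (j₀.val : ℤ) with hy0
  have hycast : ((y : ℤ) : ZMod n) = j₀ := by
    rw [hy0]
    push_cast
    rw [ZMod.natCast_val, ZMod.cast_id]
  have hy : Arc.proj ((y : ℤ) : ZMod n) ∈ X := by rw [hycast]; exact hj₀
  have hwin := psum_window hn hX hXfin hy
  set a := topSeq n X with ha
  -- the norm equals `psum` at `y`
  have hub : ∀ q ∈ ((fun i : ℕ => psum n a (i : ℤ)) '' Set.Icc 1 n), q ≤ psum n a y := by
    rintro q ⟨i, hi, rfl⟩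
    show psum n a ((i : ℕ) : ℤ) ≤ psum n a y
    set p := Lft n y (((i : ℤ)) : ZMod n) with hp
    have hpmem := Lft_mem hn y (((i : ℤ)) : ZMod n)
    have hpcast : ((p : ℤ) : ZMod n) = ((i : ℤ) : ZMod n) := Lft_cast hn y _
    have hcongr : psum n a (i : ℤ) = psum n a p := psum_congr hn a hpcast.symm
    rw [hcongr]
    by_cases hc : Arc.proj ((p : ℤ) : ZMod n) ∈ X
    · exact le_of_eq ((hwin p hpmem.1 hpmem.2).1 hc)
    · exact le_of_lt ((hwin p hpmem.1 hpmem.2).2 hc)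
  have hmemv : psum n a y ∈ ((fun i : ℕ => psum n a (i : ℤ)) '' Set.Icc 1 n) := by
    refine ⟨resRep n y, Set.mem_Icc.2 ⟨(resRep_mem hn y).1, (resRep_mem hn y).2⟩, ?_⟩
    exact psum_congr hn a (resRep_cast hn y)
  have hfin : ((fun i : ℕ => psum n a (i : ℤ)) '' Set.Icc 1 n).Finite :=
    (Set.finite_Icc 1 n).image _
  have hpn : pnorm n a = psum n a y :=
    le_antisymm (csSup_le ⟨_, hmemv⟩ hub) (le_csSup hfin.bddAbove hmemv)
  -- transfer `j` into the window
  set p := Lft n y (((j : ℕ)) : ZMod n) with hp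
  have hpmem := Lft_mem hn y (((j : ℕ)) : ZMod n)
  have hpcast : ((p : ℤ) : ZMod n) = ((j : ℕ) : ZMod n) := Lft_cast hn y _
  have hjcast : ((j : ℤ) : ZMod n) = ((j : ℕ) : ZMod n) := by push_cast; rfl
  have hcongr : psum n a (j : ℤ) = psum n a p := psum_congr hn a (by rw [hpcast, hjcast])
  constructor
  · intro hmem
    have hpm : Arc.proj ((p : ℤ) : ZMod n) ∈ X := by rw [hpcast]; exact hmem
    rw [hcongr, (hwin p hpmem.1 hpmem.2).1 hpm, hpn]
  · intro heq
    by_contra hnotmem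
    have hpm : Arc.proj ((p : ℤ) : ZMod n) ∉ X := by rw [hpcast]; exact hnotmem
    have hlt := (hwin p hpmem.1 hpmem.2).2 hpm
    rw [hcongr, hpn] at heq
    omega


end Punctured
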